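/- Fix (i,k) with i' < k and regard R⁻_{ik}(X,Y) as a polynomial in the 2n² variables x_{ab}, y_{ab}. Then R⁻_{ik}(X,Y) = f₀·x_{ik} + f₁, where f₀ and f₁ are polynomials involving only the variables y_{ab} and the variables x_{ab} with (a,b) ≺ (i,k), and f₀ is a nonzero polynomial. (Order on pairs: (a,b) ≺ (i,k) iff b < k, or b = k and a > i.) -/

import Mathlib

open Matrix

/-- Entry of an `n × n` matrix in 1-based indexing; `0` outside the range `[1,n]²`. -/
def ent {R : Type*} [Zero R] {n : ℕ} (X : Matrix (Fin n) (Fin n) R) (a b : ℕ) : R :=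
  if h : 1 ≤ a ∧ a ≤ n ∧ 1 ≤ b ∧ b ≤ n then X ⟨a - 1, by omega⟩ ⟨b - 1, by omega⟩ else 0

/-- `Dmin k X`: the left lower corner minor of order `n - k + 1`;
rows `k,…,n`, columns `1,…,n-k+1` (1-based). -/
noncomputable def Dmin {R : Type*} [CommRing R] {n : ℕ} (k : ℕ)
    (X : Matrix (Fin n) (Fin n) R) : R :=
  (Matrix.of fun r c : Fin (n + 1 - k) => ent X (k + r.val) (1 + c.val)).det

/-- `Mmin i j X`: minor of order `n - i + 1` with rows `i,…,n` and
columns `1,…,n-i` together with column `j` (1-based). -/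
noncomputable def Mmin {R : Type*} [CommRing R] {n : ℕ} (i j : ℕ)
    (X : Matrix (Fin n) (Fin n) R) : R :=
  (Matrix.of fun r c : Fin (n + 1 - i) =>
    ent X (i + r.val) (if c.val < n - i then 1 + c.val else j)).det

/-- `Nmin j k Y`: minor of order `n - k + 1` with rows `{j} ∪ {k+1,…,n}` and
columns `1,…,n-k+1` (1-based). -/
noncomputable def Nmin {R : Type*} [CommRing R] {n : ℕ} (j k : ℕ)
    (Y : Matrix (Fin n) (Fin n) R) : R :=
  (Matrix.of fun r c : Fin (n + 1 - k) =>
    ent Y (if r.val = 0 then j else k + r.val) (1 + c.val)).det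

/-- `Pmin i k X Y = Σ_{j=i'}^{k} M_{ij}(X) N_{jk}(Y)`, where `i' = n - i + 1`. -/
noncomputable def Pmin {R : Type*} [CommRing R] {n : ℕ} (i k : ℕ)
    (X Y : Matrix (Fin n) (Fin n) R) : R :=
  ∑ j ∈ Finset.Icc (n + 1 - i) k, Mmin i j X * Nmin j k Y

/-- `Rminus i k X Y`: determinant of the `k × k` matrix whose first `n - i + 1` rows are
rows `i,…,n` of `X` restricted to columns `1,…,k`, and whose remaining rows are the last
`k - (n - i + 1)` rows of `Y` restricted to columns `1,…,k`. -/
noncomputable def Rminus {R : Type*} [CommRing R] {n : ℕ} (i k : ℕ)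
    (X Y : Matrix (Fin n) (Fin n) R) : R :=
  (Matrix.of fun r c : Fin k =>
    if r.val < n + 1 - i then ent X (i + r.val) (1 + c.val)
    else ent Y (n - k + 1 + r.val) (1 + c.val)).det

/-- `Rplus i k Z X`: determinant of the `(n-i+1) × (n-i+1)` matrix whose first
`(n-i+1) - k` columns are columns `1,…,(n-i+1)-k` of `Z` restricted to rows `i,…,n`,
and whose last `k` columns are columns `1,…,k` of `X` restricted to rows `i,…,n`. -/
noncomputable def Rplus {R : Type*} [CommRing R] {n : ℕ} (i k : ℕ)
    (Z X : Matrix (Fin n) (Fin n) R) : R :=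
  (Matrix.of fun r c : Fin (n + 1 - i) =>
    if c.val < n + 1 - i - k then ent Z (i + r.val) (1 + c.val)
    else ent X (i + r.val) (c.val - (n + 1 - i - k) + 1)).det

/-- Square minor of order `m` with rows `r₀, r₀+1, …` and columns `c₀, c₀+1, …` (1-based). -/
noncomputable def RectMinor {R : Type*} [CommRing R] {n : ℕ} (r₀ c₀ m : ℕ)
    (X : Matrix (Fin n) (Fin n) R) : R :=
  (Matrix.of fun r c : Fin m => ent X (r₀ + r.val) (c₀ + c.val)).det

/-- `u` is upper triangular with ones on the diagonal. -/
def IsUT {R : Type*} [CommRing R] {n : ℕ} (u : Matrix (Fin n) (Fin n) R) : Prop :=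
  (∀ i, u i i = 1) ∧ ∀ i j : Fin n, (j : ℕ) < (i : ℕ) → u i j = 0

/-- Anti-diagonal matrix: entries off the anti-diagonal vanish (0-based: `a + b = n - 1`). -/
def AntiDiag {R : Type*} [Zero R] {n : ℕ} (X : Matrix (Fin n) (Fin n) R) : Prop :=
  ∀ a b : Fin n, (a : ℕ) + (b : ℕ) ≠ n - 1 → X a b = 0

/-- Lower anti-triangular: entries above the anti-diagonal vanish. -/
def LowerAnti {R : Type*} [Zero R] {n : ℕ} (X : Matrix (Fin n) (Fin n) R) : Prop :=
  ∀ a b : Fin n, (a : ℕ) + (b : ℕ) < n - 1 → X a b = 0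

/-- Upper anti-triangular: entries below the anti-diagonal vanish. -/
def UpperAnti {R : Type*} [Zero R] {n : ℕ} (X : Matrix (Fin n) (Fin n) R) : Prop :=
  ∀ a b : Fin n, n - 1 < (a : ℕ) + (b : ℕ) → X a b = 0

open MvPolynomial in
lemma vars_prod_subset' {σ K ι : Type*} [CommRing K] [DecidableEq σ] (s : Finset ι)
    (f : ι → MvPolynomial σ K) (S : Set σ) (h : ∀ j ∈ s, ∀ v ∈ (f j).vars, v ∈ S) :
    ∀ v ∈ (∏ j ∈ s, f j).vars, v ∈ S := by
  induction s using Finset.cons_induction with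
  | empty => simp
  | cons a s ha ih =>
    rw [Finset.prod_cons]
    intro v hv
    rcases Finset.mem_union.mp (MvPolynomial.vars_mul _ _ hv) with h1 | h1
    · exact h a (Finset.mem_cons_self a s) v h1
    · exact ih (fun j hj => h j (Finset.mem_cons_of_mem hj)) v h1

open MvPolynomial in
lemma vars_det_subset' {σ K : Type*} [CommRing K] [DecidableEq σ] {p : ℕ}
    (M : Matrix (Fin p) (Fin p) (MvPolynomial σ K)) (S : Set σ)
    (h : ∀ r c, ∀ v ∈ (M r c).vars, v ∈ S) : ∀ v ∈ M.det.vars, v ∈ S := by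
  rw [Matrix.det_apply]
  intro v hv
  obtain ⟨τ, _, hv⟩ := Finset.mem_biUnion.mp (MvPolynomial.vars_sum_subset _ _ hv)
  have hv' : v ∈ (∏ j, M (τ j) j).vars := by
    rcases Int.units_eq_one_or (Equiv.Perm.sign τ) with hs | hs <;> rw [hs] at hv
    · simpa using hv
    · rw [Units.neg_smul, one_smul, MvPolynomial.vars_neg] at hv; exact hv
  exact vars_prod_subset' _ _ S (fun j _ => h _ _) v hv'

open MvPolynomial in
lemma vars_neg_one_pow {σ K : Type*} [CommRing K] [DecidableEq σ] (m : ℕ) :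
    ((-1 : MvPolynomial σ K) ^ m).vars = ∅ := by
  have h1 : ((-1 : MvPolynomial σ K) ^ m).vars ⊆ (-1 : MvPolynomial σ K).vars :=
    MvPolynomial.vars_pow _ _
  rw [show (-1 : MvPolynomial σ K) = -(1) from rfl, MvPolynomial.vars_neg,
    MvPolynomial.vars_one] at h1
  exact Finset.subset_empty.mp h1

open MvPolynomial in
/-- regarded as a polynomial in the `2n²` variables `x_{ab}, y_{ab}`,
`R⁻_{ik}(X,Y) = f₀ · x_{ik} + f₁` where `f₀ ≠ 0` and `f₀, f₁` involve only the
variables `y_{ab}` and the variables `x_{ab}` with `(a,b) ≺ (i,k)`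
(`(a,b) ≺ (i,k)` iff `b < k`, or `b = k` and `a > i`). -/
theorem Rminus_triangular {K : Type*} [Field K] {n : ℕ}
    (i k : ℕ) (hi1 : 1 ≤ i) (hi2 : i ≤ n) (hk : k ≤ n) (hik : n + 1 - i < k) :
    ∃ f₀ f₁ : MvPolynomial ((Fin n × Fin n) ⊕ (Fin n × Fin n)) K,
      f₀ ≠ 0 ∧
      Rminus i k
          (Matrix.of fun a b : Fin n => (X (Sum.inl (a, b)) : MvPolynomial _ K))
          (Matrix.of fun a b : Fin n => (X (Sum.inr (a, b)) : MvPolynomial _ K))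
        = f₀ * X (Sum.inl (⟨i - 1, by omega⟩, ⟨k - 1, by omega⟩)) + f₁ ∧
      (∀ v ∈ f₀.vars,
        Sum.elim (fun p : Fin n × Fin n =>
          (p.2 : ℕ) + 1 < k ∨ ((p.2 : ℕ) + 1 = k ∧ i < (p.1 : ℕ) + 1)) (fun _ => True) v) ∧
      (∀ v ∈ f₁.vars,
        Sum.elim (fun p : Fin n × Fin n =>
          (p.2 : ℕ) + 1 < k ∨ ((p.2 : ℕ) + 1 = k ∧ i < (p.1 : ℕ) + 1)) (fun _ => True) v) := by
  classical
  obtain ⟨m, rfl⟩ : ∃ m, k = m + 1 := ⟨k - 1, by omega⟩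
  have hm : 1 ≤ m := by omega
  set σT := (Fin n × Fin n) ⊕ (Fin n × Fin n) with hσT
  set Pset : σT → Prop := Sum.elim (fun p : Fin n × Fin n =>
      (p.2 : ℕ) + 1 < m + 1 ∨ ((p.2 : ℕ) + 1 = m + 1 ∧ i < (p.1 : ℕ) + 1))
      (fun _ => True) with hPset
  set XX : Matrix (Fin n) (Fin n) (MvPolynomial σT K) :=
    Matrix.of fun a b : Fin n => (X (Sum.inl (a, b)) : MvPolynomial _ K) with hXX
  set YY : Matrix (Fin n) (Fin n) (MvPolynomial σT K) :=
    Matrix.of fun a b : Fin n => (X (Sum.inr (a, b)) : MvPolynomial _ K) with hYY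
  set M : Matrix (Fin (m + 1)) (Fin (m + 1)) (MvPolynomial σT K) :=
    Matrix.of fun r c : Fin (m + 1) =>
      if r.val < n + 1 - i then ent XX (i + r.val) (1 + c.val)
      else ent YY (n - (m + 1) + 1 + r.val) (1 + c.val) with hMdef
  have hR : Rminus i (m + 1) XX YY = M.det := rfl
  -- entries with row ≥ 1 or column < m have allowed variables
  have hM : ∀ r c : Fin (m + 1), (1 ≤ r.val ∨ c.val < m) → ∀ v ∈ (M r c).vars, Pset v := by
    intro r c hrc v hv
    have hcl := c.is_lt
    have hrl := r.is_lt
    simp only [hMdef, Matrix.of_apply] at hv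
    split_ifs at hv with h1
    · rw [ent, dif_pos (by omega)] at hv
      simp only [hXX, Matrix.of_apply, MvPolynomial.vars_X, Finset.mem_singleton] at hv
      subst hv
      simp only [hPset, Sum.elim_inl]
      omega
    · rw [ent, dif_pos (by omega)] at hv
      simp only [hYY, Matrix.of_apply, MvPolynomial.vars_X, Finset.mem_singleton] at hv
      subst hv
      simp only [hPset, Sum.elim_inr]
  -- the minor obtained by deleting row 0 and the last column
  set N : Matrix (Fin m) (Fin m) (MvPolynomial σT K) :=
    M.submatrix Fin.succ (Fin.last m).succAbove with hNdef
  set E : Fin m → Fin m → σT := fun r c =>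
    if h : r.val + 1 < n + 1 - i then
      Sum.inl (⟨i + r.val, by omega⟩, ⟨c.val, by omega⟩)
    else Sum.inr (⟨n - m + r.val, by omega⟩, ⟨c.val, by omega⟩) with hEdef
  have hNE : ∀ r c : Fin m, N r c = X (E r c) := by
    intro r c
    have hcl := c.is_lt
    have hrl := r.is_lt
    show M r.succ ((Fin.last m).succAbove c) = _
    rw [Fin.succAbove_last]
    simp only [hMdef, Matrix.of_apply, Fin.val_succ, Fin.coe_castSucc, hEdef]
    split_ifs with h1
    · rw [ent, dif_pos (by omega)]
      simp only [hXX, Matrix.of_apply]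
      exact congrArg X (by simp only [Sum.inl.injEq, Prod.mk.injEq, Fin.mk.injEq]; omega)
    · rw [ent, dif_pos (by omega)]
      simp only [hYY, Matrix.of_apply]
      exact congrArg X (by simp only [Sum.inr.injEq, Prod.mk.injEq, Fin.mk.injEq]; omega)
  have hEinj : ∀ r c r' c' : Fin m, E r c = E r' c' → r = r' ∧ c = c' := by
    intro r c r' c' h
    simp only [hEdef] at h
    split_ifs at h with h1 h2 h2
    · rw [Sum.inl.injEq, Prod.mk.injEq, Fin.mk.injEq, Fin.mk.injEq] at h
      obtain ⟨ha, hb⟩ := h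
      exact ⟨Fin.ext (by omega), Fin.ext hb⟩
    · rw [Sum.inr.injEq, Prod.mk.injEq, Fin.mk.injEq, Fin.mk.injEq] at h
      obtain ⟨ha, hb⟩ := h
      have hmn : m ≤ n := by omega
      exact ⟨Fin.ext (by omega), Fin.ext hb⟩
  have hPE : ∀ r c : Fin m, Pset (E r c) := by
    intro r c
    have hcl := c.is_lt
    simp only [hEdef]
    split_ifs with h1
    · simp only [hPset, Sum.elim_inl]; omega
    · simp only [hPset, Sum.elim_inr]
  -- f₀ is nonzero
  have hNne : N.det ≠ 0 := by
    set φ : σT → K := fun v => if ∃ r : Fin m, E r r = v then 1 else 0 with hφ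
    have hmap : N.map (eval φ) = 1 := by
      ext r c
      rw [Matrix.map_apply, hNE, eval_X, Matrix.one_apply]
      simp only [hφ]
      by_cases hrc : r = c
      · subst hrc; rw [if_pos ⟨r, rfl⟩, if_pos rfl]
      · rw [if_neg, if_neg hrc]
        rintro ⟨r', hr'⟩
        obtain ⟨h1, h2⟩ := hEinj _ _ _ _ hr'
        exact hrc (h1 ▸ h2)
    have h1 : eval φ N.det = 1 := by
      rw [RingHom.map_det, RingHom.mapMatrix_apply, hmap, Matrix.det_one]
    intro h
    rw [h, map_zero] at h1
    exact zero_ne_one h1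
  refine ⟨(-1 : MvPolynomial σT K) ^ m * N.det,
    ∑ j ∈ Finset.univ.erase (Fin.last m),
      (-1 : MvPolynomial σT K) ^ (j : ℕ) * M 0 j * (M.submatrix Fin.succ j.succAbove).det,
    mul_ne_zero (pow_ne_zero _ (neg_ne_zero.mpr one_ne_zero)) hNne, ?_, ?_, ?_⟩
  · -- the expansion
    have h0 : M 0 (Fin.last m) =
        X (Sum.inl (⟨i - 1, by omega⟩, ⟨m + 1 - 1, by omega⟩)) := by
      simp only [hMdef, Matrix.of_apply, Fin.val_last]
      rw [if_pos (by simp only [Fin.val_zero]; omega), ent, dif_pos (by simp only [Fin.val_zero]; omega)]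
      simp only [hXX, Matrix.of_apply]
      exact congrArg X (by simp only [Sum.inl.injEq, Prod.mk.injEq, Fin.mk.injEq, Fin.val_zero]; omega)
    rw [hR, Matrix.det_succ_row_zero,
      ← Finset.sum_erase_add _ _ (Finset.mem_univ (Fin.last m)), h0, Fin.val_last]
    ring
  · intro v hv
    rcases Finset.mem_union.mp (MvPolynomial.vars_mul _ _ hv) with h1 | h1
    · rw [vars_neg_one_pow] at h1; exact absurd h1 (Finset.notMem_empty v)
    · exact vars_det_subset' N Pset (fun r c v hv => by
        rw [hNE, MvPolynomial.vars_X] at hv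
        exact Finset.mem_singleton.mp hv ▸ hPE r c) v h1
  · intro v hv
    obtain ⟨j, hj, hv⟩ := Finset.mem_biUnion.mp (MvPolynomial.vars_sum_subset _ _ hv)
    have hjm : (j : ℕ) < m := by
      have h1 := j.is_lt
      have hne : j ≠ Fin.last m := (Finset.mem_erase.mp hj).1
      have h2 : (j : ℕ) ≠ m := fun h => hne (Fin.ext (by simp [h, Fin.val_last]))
      omega
    rcases Finset.mem_union.mp (MvPolynomial.vars_mul _ _ hv) with h1 | h1
    · rcases Finset.mem_union.mp (MvPolynomial.vars_mul _ _ h1) with h2 | h2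
      · rw [vars_neg_one_pow] at h2; exact absurd h2 (Finset.notMem_empty v)
      · exact hM 0 j (Or.inr hjm) v h2
    · exact vars_det_subset' _ Pset (fun r c v hv =>
        hM r.succ (j.succAbove c) (Or.inl (by simp [Fin.val_succ])) v hv) v h1
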